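/- For the grid graph G = P_m □ P_n with m, n ≥ 2, mvd(G) = 2. -/

import Mathlib

open SimpleGraph

variable {V : Type*}

/-- `S` is a set of vertices (not containing `x` or `y`) whose removal separates `x` from `y`:
every walk from `x` to `y` meets `S`. -/
def IsSepSet (G : SimpleGraph V) (S : Set V) (x y : V) : Prop :=
  x ∉ S ∧ y ∉ S ∧ ∀ p : G.Walk x y, ∃ v ∈ p.support, v ∈ S

/-- `τ` is an MVD-coloring of `G`: every pair of distinct nonadjacent vertices is
separated by a monochromatic vertex cut. -/
def IsMVDColoring (G : SimpleGraph V) (τ : V → ℕ) : Prop :=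
  ∀ x y : V, x ≠ y → ¬ G.Adj x y →
    ∃ S : Set V, IsSepSet G S x y ∧ ∀ u ∈ S, ∀ w ∈ S, τ u = τ w

/-- The monochromatic vertex-disconnection number: the maximum number of colors
used by an MVD-coloring of `G`. -/
noncomputable def mvd (G : SimpleGraph V) : ℕ :=
  sSup {k | ∃ τ : V → ℕ, IsMVDColoring G τ ∧ (Set.range τ).ncard = k}

/-- Discrete intermediate value theorem along a walk. -/
lemma walk_ivt {G : SimpleGraph V} (g : V → ℤ)
    (hg : ∀ u v : V, G.Adj u v → g v ≤ g u + 1) (k : ℤ) :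
    ∀ {x y : V} (p : G.Walk x y), g x ≤ k → k ≤ g y → ∃ v ∈ p.support, g v = k := by
  intro x y p
  induction p with
  | @nil a => intro hx hy; exact ⟨a, by simp, by omega⟩
  | @cons a b c h q ih =>
    intro hx hy
    by_cases hak : g a = k
    · exact ⟨a, by simp, hak⟩
    · have hb : g b ≤ k := by have := hg a b h; omega
      obtain ⟨v, hv, hvk⟩ := ih hb hy
      exact ⟨v, by simp [hv], hvk⟩

lemma walk_ivt' {G : SimpleGraph V} (g : V → ℤ)
    (hg : ∀ u v : V, G.Adj u v → g v ≤ g u + 1 ∧ g u ≤ g v + 1) {x y : V} (p : G.Walk x y)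
    (k : ℤ) (h : (g x ≤ k ∧ k ≤ g y) ∨ (g y ≤ k ∧ k ≤ g x)) :
    ∃ v ∈ p.support, g v = k := by
  rcases h with ⟨h1, h2⟩ | ⟨h1, h2⟩
  · exact walk_ivt g (fun u v h => (hg u v h).1) k p h1 h2
  · obtain ⟨v, hv, hvk⟩ := walk_ivt (fun v => -g v)
      (fun u v h => by have := (hg u v h).2; show -g v ≤ -g u + 1; omega) (-k) p
      (by show -g x ≤ -k; omega) (by show -k ≤ -g y; omega)
    have hvk' : -(g v) = -k := hvk
    exact ⟨v, hv, by omega⟩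

lemma grid_adj_vals {m n : ℕ} {u v : Fin m × Fin n}
    (h : ((pathGraph m) □ (pathGraph n)).Adj u v) :
    ((u.1.val + 1 = v.1.val ∨ v.1.val + 1 = u.1.val) ∧ u.2.val = v.2.val) ∨
    ((u.2.val + 1 = v.2.val ∨ v.2.val + 1 = u.2.val) ∧ u.1.val = v.1.val) := by
  rw [boxProd_adj] at h
  rcases h with ⟨h1, h2⟩ | ⟨h1, h2⟩
  · rw [pathGraph_adj] at h1
    exact Or.inl ⟨h1, by rw [h2]⟩
  · rw [pathGraph_adj] at h1
    exact Or.inr ⟨h1, by rw [h2]⟩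

/-- The checkerboard coloring is an MVD-coloring of the grid. -/
lemma grid_lower_bound (m n : ℕ) :
    IsMVDColoring ((pathGraph m) □ (pathGraph n))
      (fun v : Fin m × Fin n => (v.1.val + v.2.val) % 2) := by
  intro x y hxy hna
  have hne : x.1.val ≠ y.1.val ∨ x.2.val ≠ y.2.val := by
    by_contra hc
    push_neg at hc
    exact hxy (Prod.ext (Fin.ext hc.1) (Fin.ext hc.2))
  rw [boxProd_adj] at hna
  push_neg at hna
  have hna1 : ¬ ((x.1.val + 1 = y.1.val ∨ y.1.val + 1 = x.1.val) ∧ x.2.val = y.2.val) := by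
    intro ⟨h1, h2⟩
    exact (hna.1 (pathGraph_adj.mpr h1)) (Fin.ext h2)
  have hna2 : ¬ ((x.2.val + 1 = y.2.val ∨ y.2.val + 1 = x.2.val) ∧ x.1.val = y.1.val) := by
    intro ⟨h1, h2⟩
    exact (hna.2 (pathGraph_adj.mpr h1)) (Fin.ext h2)
  set x1 := x.1.val with hx1; set x2 := x.2.val with hx2
  set y1 := y.1.val with hy1; set y2 := y.2.val with hy2
  by_cases hs : x1 + x2 + 2 ≤ y1 + y2 ∨ y1 + y2 + 2 ≤ x1 + x2
  · -- antidiagonal separator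
    obtain ⟨k, hk1, hk2, hk3⟩ : ∃ k : ℤ, (x1 + x2 : ℤ) ≠ k ∧ (y1 + y2 : ℤ) ≠ k ∧
        (((x1 + x2 : ℤ) ≤ k ∧ k ≤ (y1 + y2 : ℤ)) ∨ ((y1 + y2 : ℤ) ≤ k ∧ k ≤ (x1 + x2 : ℤ))) := by
      rcases hs with hs | hs
      · exact ⟨(x1 + x2 : ℤ) + 1, by omega, by omega, by omega⟩
      · exact ⟨(y1 + y2 : ℤ) + 1, by omega, by omega, by omega⟩
    refine ⟨{v | (v.1.val : ℤ) + v.2.val = k}, ⟨?_, ?_, ?_⟩, ?_⟩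
    · simp only [Set.mem_setOf_eq]; omega
    · simp only [Set.mem_setOf_eq]; omega
    · intro p
      refine walk_ivt' (fun v => (v.1.val : ℤ) + v.2.val)
        (fun u v h => by
          have := grid_adj_vals h
          constructor
          · show (v.1.val : ℤ) + v.2.val ≤ (u.1.val : ℤ) + u.2.val + 1; omega
          · show (u.1.val : ℤ) + u.2.val ≤ (v.1.val : ℤ) + v.2.val + 1; omega) p k ?_
      show ((x.1.val : ℤ) + x.2.val ≤ k ∧ k ≤ (y.1.val : ℤ) + y.2.val) ∨
        ((y.1.val : ℤ) + y.2.val ≤ k ∧ k ≤ (x.1.val : ℤ) + x.2.val)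
      omega
    · intro u hu w hw
      simp only [Set.mem_setOf_eq] at hu hw
      show (u.1.val + u.2.val) % 2 = (w.1.val + w.2.val) % 2
      omega
  · by_cases hd : (x1 : ℤ) - x2 + 2 ≤ (y1 : ℤ) - y2 ∨ (y1 : ℤ) - y2 + 2 ≤ (x1 : ℤ) - x2
    · -- diagonal separator
      obtain ⟨k, hk1, hk2, hk3⟩ : ∃ k : ℤ, (x1 : ℤ) - x2 ≠ k ∧ (y1 : ℤ) - y2 ≠ k ∧
          (((x1 : ℤ) - x2 ≤ k ∧ k ≤ (y1 : ℤ) - y2) ∨ ((y1 : ℤ) - y2 ≤ k ∧ k ≤ (x1 : ℤ) - x2)) := by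
        rcases hd with hd | hd
        · exact ⟨(x1 : ℤ) - x2 + 1, by omega, by omega, by omega⟩
        · exact ⟨(y1 : ℤ) - y2 + 1, by omega, by omega, by omega⟩
      refine ⟨{v | (v.1.val : ℤ) - v.2.val = k}, ⟨?_, ?_, ?_⟩, ?_⟩
      · simp only [Set.mem_setOf_eq]; omega
      · simp only [Set.mem_setOf_eq]; omega
      · intro p
        refine walk_ivt' (fun v => (v.1.val : ℤ) - v.2.val)
          (fun u v h => by
            have := grid_adj_vals h
            constructor
            · show (v.1.val : ℤ) - v.2.val ≤ (u.1.val : ℤ) - u.2.val + 1; omega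
            · show (u.1.val : ℤ) - u.2.val ≤ (v.1.val : ℤ) - v.2.val + 1; omega) p k ?_
        show ((x.1.val : ℤ) - x.2.val ≤ k ∧ k ≤ (y.1.val : ℤ) - y.2.val) ∨
          ((y.1.val : ℤ) - y.2.val ≤ k ∧ k ≤ (x.1.val : ℤ) - x.2.val)
        omega
      · intro u hu w hw
        simp only [Set.mem_setOf_eq] at hu hw
        show (u.1.val + u.2.val) % 2 = (w.1.val + w.2.val) % 2
        omega
    · exfalso; omega

/-- If `x,y` are distinct nonadjacent with common neighbors `u,w`, then any MVD-coloring
gives `u` and `w` the same color. -/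
lemma common_nbrs {G : SimpleGraph V} {τ : V → ℕ} (hτ : IsMVDColoring G τ) {x y u w : V}
    (hxy : x ≠ y) (hna : ¬ G.Adj x y) (hxu : G.Adj x u) (huy : G.Adj u y)
    (hxw : G.Adj x w) (hwy : G.Adj w y) : τ u = τ w := by
  obtain ⟨S, ⟨hxS, hyS, hsep⟩, hmono⟩ := hτ x y hxy hna
  have key : ∀ z : V, G.Adj x z → G.Adj z y → z ∈ S := by
    intro z h1 h2
    obtain ⟨v, hv, hvS⟩ := hsep (Walk.cons h1 (Walk.cons h2 Walk.nil))
    simp only [Walk.support_cons, Walk.support_nil, List.mem_cons, List.mem_singleton] at hv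
    rcases hv with rfl | rfl | rfl | h
    · exact absurd hvS hxS
    · exact hvS
    · exact absurd hvS hyS
    · exact absurd h List.not_mem_nil
  exact hmono u (key u hxu huy) w (key w hxw hwy)

lemma grid_constraint {m n : ℕ} {τ : Fin m × Fin n → ℕ}
    (hτ : IsMVDColoring ((pathGraph m) □ (pathGraph n)) τ)
    (i j : ℕ) (hi : i + 1 < m) (hj : j + 1 < n) :
    τ (⟨i, by omega⟩, ⟨j + 1, hj⟩) = τ (⟨i + 1, hi⟩, ⟨j, by omega⟩) ∧
    τ (⟨i, by omega⟩, ⟨j, by omega⟩) = τ (⟨i + 1, hi⟩, ⟨j + 1, hj⟩) := by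
  have adj : ∀ (a b : Fin m) (c d : Fin n),
      ((a.val + 1 = b.val ∨ b.val + 1 = a.val) ∧ c = d ∨
       (c.val + 1 = d.val ∨ d.val + 1 = c.val) ∧ a = b) →
      ((pathGraph m) □ (pathGraph n)).Adj (a, c) (b, d) := by
    intro a b c d h
    rw [boxProd_adj]
    rcases h with ⟨h1, h2⟩ | ⟨h1, h2⟩
    · exact Or.inl ⟨pathGraph_adj.mpr h1, h2⟩
    · exact Or.inr ⟨pathGraph_adj.mpr h1, h2⟩
  have nadj : ∀ (a b : Fin m) (c d : Fin n), a.val ≠ b.val → c.val ≠ d.val →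
      ¬ ((pathGraph m) □ (pathGraph n)).Adj (a, c) (b, d) := by
    intro a b c d h1 h2 h
    rw [boxProd_adj] at h
    rcases h with ⟨_, h⟩ | ⟨_, h⟩
    · exact h2 (congrArg Fin.val h)
    · exact h1 (congrArg Fin.val h)
  constructor
  · refine common_nbrs hτ (x := (⟨i, by omega⟩, ⟨j, by omega⟩))
      (y := (⟨i+1, hi⟩, ⟨j+1, hj⟩)) ?_ ?_ ?_ ?_ ?_ ?_
    · intro h; have := congrArg (fun z => z.1.val) h; simp at this
    · exact nadj _ _ _ _ (by simp) (by simp)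
    · exact adj _ _ _ _ (Or.inr ⟨Or.inl rfl, rfl⟩)
    · exact adj _ _ _ _ (Or.inl ⟨Or.inl rfl, rfl⟩)
    · exact adj _ _ _ _ (Or.inl ⟨Or.inl rfl, rfl⟩)
    · exact adj _ _ _ _ (Or.inr ⟨Or.inl rfl, rfl⟩)
  · refine common_nbrs hτ (x := (⟨i, by omega⟩, ⟨j+1, hj⟩))
      (y := (⟨i+1, hi⟩, ⟨j, by omega⟩)) ?_ ?_ ?_ ?_ ?_ ?_
    · intro h; have := congrArg (fun z => z.1.val) h; simp at this
    · exact nadj _ _ _ _ (by simp) (by simp)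
    · exact adj _ _ _ _ (Or.inr ⟨Or.inr rfl, rfl⟩)
    · exact adj _ _ _ _ (Or.inl ⟨Or.inl rfl, rfl⟩)
    · exact adj _ _ _ _ (Or.inl ⟨Or.inl rfl, rfl⟩)
    · exact adj _ _ _ _ (Or.inr ⟨Or.inr rfl, rfl⟩)

lemma grid_reduce {m n : ℕ} (hm : 2 ≤ m) (hn : 2 ≤ n) {τ : Fin m × Fin n → ℕ}
    (hτ : IsMVDColoring ((pathGraph m) □ (pathGraph n)) τ) :
    ∀ (N i j : ℕ) (hi : i < m) (hj : j < n), 2 * i + j ≤ N →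
      τ (⟨i, hi⟩, ⟨j, hj⟩) = τ (⟨0, by omega⟩, ⟨0, by omega⟩) ∨
      τ (⟨i, hi⟩, ⟨j, hj⟩) = τ (⟨0, by omega⟩, ⟨1, by omega⟩) := by
  intro N
  induction N with
  | zero =>
    intro i j hi hj hN
    obtain rfl : i = 0 := by omega
    obtain rfl : j = 0 := by omega
    exact Or.inl rfl
  | succ N ih =>
    intro i j hi hj hN
    match i, j with
    | 0, 0 => exact Or.inl rfl
    | 0, 1 => exact Or.inr rfl
    | 0, (j' + 1 + 1) =>
      have h1 := (grid_constraint hτ 0 (j' + 1) (by omega) (by omega)).1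
      have h2 := (grid_constraint hτ 0 j' (by omega) (by omega)).2
      rw [h1, ← h2]
      exact ih 0 j' (by omega) (by omega) (by omega)
    | (i' + 1), 0 =>
      have h1 := (grid_constraint hτ i' 0 (by omega) (by omega)).1
      rw [← h1]
      exact ih i' 1 (by omega) (by omega) (by omega)
    | (i' + 1), (j' + 1) =>
      have h2 := (grid_constraint hτ i' j' (by omega) (by omega)).2
      rw [← h2]
      exact ih i' j' (by omega) (by omega) (by omega)

lemma grid_upper_bound {m n : ℕ} (hm : 2 ≤ m) (hn : 2 ≤ n) {τ : Fin m × Fin n → ℕ}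
    (hτ : IsMVDColoring ((pathGraph m) □ (pathGraph n)) τ) :
    (Set.range τ).ncard ≤ 2 := by
  have hsub : Set.range τ ⊆
      {τ (⟨0, by omega⟩, ⟨0, by omega⟩), τ (⟨0, by omega⟩, ⟨1, by omega⟩)} := by
    rintro c ⟨v, rfl⟩
    have hv : τ v = τ ((⟨v.1.val, v.1.isLt⟩ : Fin m), (⟨v.2.val, v.2.isLt⟩ : Fin n)) := by
      congr
    rw [hv]
    rcases grid_reduce hm hn hτ (2 * v.1.val + v.2.val) v.1.val v.2.val v.1.isLt v.2.isLt
      le_rfl with h | h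
    · exact Or.inl h
    · exact Or.inr h
  calc (Set.range τ).ncard ≤ _ :=
        Set.ncard_le_ncard hsub ((Set.finite_singleton _).insert _)
    _ ≤ 2 := by
        refine le_trans (Set.ncard_insert_le _ _) ?_
        simp

theorem mvd_grid (m n : ℕ) (hm : 2 ≤ m) (hn : 2 ≤ n) :
    mvd ((pathGraph m) □ (pathGraph n)) = 2 := by
  have hmem : 2 ∈ {k | ∃ τ : Fin m × Fin n → ℕ,
      IsMVDColoring ((pathGraph m) □ (pathGraph n)) τ ∧ (Set.range τ).ncard = k} := by
    refine ⟨fun v => (v.1.val + v.2.val) % 2, grid_lower_bound m n, ?_⟩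
    have hr : Set.range (fun v : Fin m × Fin n => (v.1.val + v.2.val) % 2) = {0, 1} := by
      ext c
      constructor
      · rintro ⟨v, rfl⟩
        simp only [Set.mem_insert_iff, Set.mem_singleton_iff]
        omega
      · intro hc
        rcases hc with rfl | rfl
        · exact ⟨((⟨0, by omega⟩ : Fin m), (⟨0, by omega⟩ : Fin n)), rfl⟩
        · exact ⟨((⟨0, by omega⟩ : Fin m), (⟨1, by omega⟩ : Fin n)), rfl⟩
    rw [hr]
    exact Set.ncard_pair (by norm_num)
  have hub : ∀ k ∈ {k | ∃ τ : Fin m × Fin n → ℕ,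
      IsMVDColoring ((pathGraph m) □ (pathGraph n)) τ ∧ (Set.range τ).ncard = k}, k ≤ 2 := by
    rintro k ⟨τ, hτ, rfl⟩
    exact grid_upper_bound hm hn hτ
  unfold mvd
  exact le_antisymm (csSup_le ⟨2, hmem⟩ hub) (le_csSup ⟨2, hub⟩ hmem)
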